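/- arXiv:1409.8653 — 8 statements merged into one kernel-verified Lean document; each statement's English description precedes it below -/
import Mathlib

section
/- Let S be a nonempty finite index set and p : S → ℝ with 0 < p i ≤ 1 for all i ∈ S, satisfying the Bounded Ratio Condition with constant Γ ≥ 1. Then for every i ∈ S, the Shannon–Fano length satisfies ⌈log₂(P_S / p i)⌉ ≤ h(S)/P_S + log₂ Γ + log₂ P_S + 1. -/
/-- Let `S` be a nonempty finite index set and `p : S → ℝ` with
`0 < p i ≤ 1` for all `i ∈ S`, satisfying the Bounded Ratio Condition with constant
`Γ ≥ 1`.  Then for every `i ∈ S`, the Shannon–Fano length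
`⌈log₂ (P_S / p i)⌉` is bounded by `h(S)/P_S + log₂ Γ + log₂ P_S + 1`. -/
theorem shannon_fano_length_bound {α : Type*} (S : Finset α) (hS : S.Nonempty)
    (p : α → ℝ) (hp : ∀ i ∈ S, 0 < p i ∧ p i ≤ 1)
    (Γ : ℝ) (hΓ : 1 ≤ Γ)
    (hratio : ∀ i ∈ S, ∀ j ∈ S, p j / p i ≤ Γ) :
    ∀ i ∈ S,
      (⌈Real.logb 2 ((∑ j ∈ S, p j) / p i)⌉ : ℝ) ≤
        (∑ j ∈ S, -(p j * Real.logb 2 (p j))) / (∑ j ∈ S, p j)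
          + Real.logb 2 Γ + Real.logb 2 (∑ j ∈ S, p j) + 1 := by
  intro i hi
  have hpi : 0 < p i := (hp i hi).1
  have hΓ0 : 0 < Γ := lt_of_lt_of_le one_pos hΓ
  set P : ℝ := ∑ j ∈ S, p j with hP
  have hPpos : 0 < P := Finset.sum_pos (fun j hj => (hp j hj).1) hS
  -- key pointwise bound
  have key : ∀ j ∈ S, p j * (-(Real.logb 2 Γ) - Real.logb 2 (p i)) ≤
      -(p j * Real.logb 2 (p j)) := by
    intro j hj
    have hpj : 0 < p j := (hp j hj).1
    have hle : p j ≤ Γ * p i := by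
      have := hratio i hi j hj
      calc p j = (p j / p i) * p i := by field_simp
        _ ≤ Γ * p i := by nlinarith
    have hlog : Real.logb 2 (p j) ≤ Real.logb 2 Γ + Real.logb 2 (p i) := by
      calc Real.logb 2 (p j) ≤ Real.logb 2 (Γ * p i) :=
            Real.logb_le_logb_of_le one_lt_two hpj hle
        _ = Real.logb 2 Γ + Real.logb 2 (p i) := Real.logb_mul (ne_of_gt hΓ0) (ne_of_gt hpi)
    nlinarith [hpj.le]
  have hsum : P * (-(Real.logb 2 Γ) - Real.logb 2 (p i)) ≤
      ∑ j ∈ S, -(p j * Real.logb 2 (p j)) := by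
    rw [hP, Finset.sum_mul]
    exact Finset.sum_le_sum key
  have hdiv : -(Real.logb 2 Γ) - Real.logb 2 (p i) ≤
      (∑ j ∈ S, -(p j * Real.logb 2 (p j))) / P := by
    rw [le_div_iff₀ hPpos]
    linarith [hsum]
  have hceil : (⌈Real.logb 2 (P / p i)⌉ : ℝ) ≤ Real.logb 2 (P / p i) + 1 :=
    (Int.ceil_lt_add_one _).le
  have hlogdiv : Real.logb 2 (P / p i) = Real.logb 2 P - Real.logb 2 (p i) :=
    Real.logb_div (ne_of_gt hPpos) (ne_of_gt hpi)
  calc (⌈Real.logb 2 (P / p i)⌉ : ℝ) ≤ Real.logb 2 (P / p i) + 1 := hceil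
    _ = Real.logb 2 P - Real.logb 2 (p i) + 1 := by rw [hlogdiv]
    _ ≤ (∑ j ∈ S, -(p j * Real.logb 2 (p j))) / P
        + Real.logb 2 Γ + Real.logb 2 P + 1 := by linarith
end

section
/- Let S be a nonempty finite index set and p : S → ℝ with 0 < p i ≤ 1 for all i ∈ S, satisfying the Bounded Ratio Condition with constant Γ ≥ 1. Then for every i ∈ S, −P_S · log₂(p i) ≤ h(S) + P_S · log₂ Γ. -/
/-- Let `S` be a nonempty finite index set and `p : α → ℝ` with
`0 < p i ≤ 1` for all `i ∈ S`, satisfying the Bounded Ratio Condition with constant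
`Γ ≥ 1`.  Then for every `i ∈ S`, `−P_S · log₂ (p i) ≤ h(S) + P_S · log₂ Γ`. -/
theorem bounded_ratio_log_bound {α : Type*} (S : Finset α) (hS : S.Nonempty)
    (p : α → ℝ) (hp : ∀ i ∈ S, 0 < p i ∧ p i ≤ 1)
    (Γ : ℝ) (hΓ : 1 ≤ Γ)
    (hratio : ∀ i ∈ S, ∀ j ∈ S, p j / p i ≤ Γ) :
    ∀ i ∈ S,
      -(∑ j ∈ S, p j) * Real.logb 2 (p i) ≤
        (∑ j ∈ S, -(p j * Real.logb 2 (p j))) + (∑ j ∈ S, p j) * Real.logb 2 Γ := by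
  intro i hi
  have key : ∀ j ∈ S, -(p j * Real.logb 2 (p i)) ≤
      -(p j * Real.logb 2 (p j)) + p j * Real.logb 2 Γ := by
    intro j hj
    have hpi := (hp i hi).1
    have hpj := (hp j hj).1
    have hlog : Real.logb 2 (p j) - Real.logb 2 (p i) ≤ Real.logb 2 Γ := by
      rw [← Real.logb_div (ne_of_gt hpj) (ne_of_gt hpi)]
      exact Real.logb_le_logb_of_le (by norm_num) (div_pos hpj hpi) (hratio i hi j hj)
    nlinarith [hpj.le]
  calc -(∑ j ∈ S, p j) * Real.logb 2 (p i)
      = ∑ j ∈ S, -(p j * Real.logb 2 (p i)) := by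
        rw [Finset.sum_neg_distrib, ← Finset.sum_mul]; ring
    _ ≤ ∑ j ∈ S, (-(p j * Real.logb 2 (p j)) + p j * Real.logb 2 Γ) :=
        Finset.sum_le_sum key
    _ = (∑ j ∈ S, -(p j * Real.logb 2 (p j))) + (∑ j ∈ S, p j) * Real.logb 2 Γ := by
        rw [Finset.sum_add_distrib, ← Finset.sum_mul]
end

section
/- Let S be a nonempty finite index set and p : S → ℝ with 0 < p i ≤ 1 for all i ∈ S, satisfying the Bounded Ratio Condition with constant Γ ≥ 1. Let (U i)_{i∈S} be independent Bernoulli random variables with P(U i = 1) = p i. Then the random variable T_S = 1 + ∑_{i∈S} U i · ⌈log₂(P_S / p i)⌉ satisfies E[T_S] ≤ h(S) + P_S·log₂ Γ + P_S·log₂ P_S + P_S + 1. -/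
open MeasureTheory ProbabilityTheory

/-- Let `S` be a nonempty finite set satisfying the Bounded Ratio
Condition with constant `Γ ≥ 1`, and let `(U i)` be independent Bernoulli random
variables with `P(U i = 1) = p i`.  Then the number of tests
`T_S = 1 + ∑ i ∈ S, U i · ⌈log₂ (P_S / p i)⌉` satisfies
`E[T_S] ≤ h(S) + P_S log₂ Γ + P_S log₂ P_S + P_S + 1`. -/
theorem expected_tests_bound {α : Type*} (S : Finset α) (hS : S.Nonempty)
    (p : α → ℝ) (hp : ∀ i ∈ S, 0 < p i ∧ p i ≤ 1)
    (Γ : ℝ) (hΓ : 1 ≤ Γ)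
    (hratio : ∀ i ∈ S, ∀ j ∈ S, p j / p i ≤ Γ)
    {Ω : Type*} [MeasurableSpace Ω] (μ : Measure Ω) [IsProbabilityMeasure μ]
    (U : α → Ω → Bool) (hUmeas : ∀ i, Measurable (U i))
    (hUindep : iIndepFun U μ)
    (hUp : ∀ i ∈ S, μ {ω | U i ω = true} = ENNReal.ofReal (p i)) :
    (∫ ω, (1 + ∑ i ∈ S,
        (if U i ω then (⌈Real.logb 2 ((∑ j ∈ S, p j) / p i)⌉ : ℝ) else 0)) ∂μ) ≤
      (∑ j ∈ S, -(p j * Real.logb 2 (p j)))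
        + (∑ j ∈ S, p j) * Real.logb 2 Γ
        + (∑ j ∈ S, p j) * Real.logb 2 (∑ j ∈ S, p j)
        + (∑ j ∈ S, p j) + 1 := by
  have hPpos : 0 < ∑ j ∈ S, p j := Finset.sum_pos (fun i hi => (hp i hi).1) hS
  set P := ∑ j ∈ S, p j with hPdef
  have hmeas : ∀ i, MeasurableSet {ω | U i ω = true} := fun i =>
    (hUmeas i) (measurableSet_singleton true)
  have heq : ∀ i, (fun ω => (if U i ω then (⌈Real.logb 2 (P / p i)⌉ : ℝ) else 0))
      = Set.indicator {ω | U i ω = true} (fun _ => (⌈Real.logb 2 (P / p i)⌉ : ℝ)) := by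
    intro i
    funext ω
    simp [Set.indicator_apply]
  have hint : ∀ i ∈ S, Integrable
      (fun ω => (if U i ω then (⌈Real.logb 2 (P / p i)⌉ : ℝ) else 0)) μ := by
    intro i _
    rw [heq i]
    exact (integrable_const _).indicator (hmeas i)
  have hintsum : Integrable
      (fun ω => ∑ i ∈ S, (if U i ω then (⌈Real.logb 2 (P / p i)⌉ : ℝ) else 0)) μ :=
    integrable_finset_sum S hint
  rw [integral_add (integrable_const 1) hintsum, integral_const,
    integral_finset_sum S hint]
  simp only [measureReal_def, measure_univ, ENNReal.toReal_one, smul_eq_mul, one_mul]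
  have hterm : ∀ i ∈ S,
      (∫ ω, (if U i ω then (⌈Real.logb 2 (P / p i)⌉ : ℝ) else 0) ∂μ)
        = p i * (⌈Real.logb 2 (P / p i)⌉ : ℝ) := by
    intro i hi
    rw [heq i, integral_indicator_const _ (hmeas i), measureReal_def, hUp i hi,
      ENNReal.toReal_ofReal (hp i hi).1.le, smul_eq_mul]
  rw [Finset.sum_congr rfl hterm]
  have hbound : ∀ i ∈ S, p i * (⌈Real.logb 2 (P / p i)⌉ : ℝ)
      ≤ -(p i * Real.logb 2 (p i)) + p i * Real.logb 2 P + p i := by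
    intro i hi
    have hpi := (hp i hi).1
    have hceil : (⌈Real.logb 2 (P / p i)⌉ : ℝ) ≤ Real.logb 2 (P / p i) + 1 :=
      (Int.ceil_lt_add_one _).le
    have hlog : Real.logb 2 (P / p i) = Real.logb 2 P - Real.logb 2 (p i) :=
      Real.logb_div hPpos.ne' hpi.ne'
    calc p i * (⌈Real.logb 2 (P / p i)⌉ : ℝ)
        ≤ p i * (Real.logb 2 (P / p i) + 1) := by
          exact mul_le_mul_of_nonneg_left hceil hpi.le
      _ = -(p i * Real.logb 2 (p i)) + p i * Real.logb 2 P + p i := by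
          rw [hlog]; ring
  have hsum := Finset.sum_le_sum hbound
  have hΓterm : 0 ≤ P * Real.logb 2 Γ :=
    mul_nonneg hPpos.le (Real.logb_nonneg one_lt_two hΓ)
  have hPP : ∑ i ∈ S, p i * Real.logb 2 P = P * Real.logb 2 P := by
    rw [← Finset.sum_mul]
  calc 1 + ∑ i ∈ S, p i * (⌈Real.logb 2 (P / p i)⌉ : ℝ)
      ≤ 1 + ∑ i ∈ S, (-(p i * Real.logb 2 (p i)) + p i * Real.logb 2 P + p i) := by
        linarith
    _ = (∑ j ∈ S, -(p j * Real.logb 2 (p j))) + P * Real.logb 2 P + P + 1 := by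
        rw [Finset.sum_add_distrib, Finset.sum_add_distrib, hPP]; ring
    _ ≤ (∑ j ∈ S, -(p j * Real.logb 2 (p j))) + P * Real.logb 2 Γ
        + P * Real.logb 2 P + P + 1 := by linarith
end

section
/- Let p : Fin n → ℝ with 0 < p i ≤ 1 for all i, and let 0 < θ < 1. Then ∑_{i : p i ≤ θ} p i ≤ H / (−log₂ θ), where H = ∑_{i} h(p i) and h is the binary entropy function. -/
open scoped Classical

lemma h_nonneg (x : ℝ) (hx0 : 0 < x) (hx1 : x ≤ 1) :
    0 ≤ -(x * Real.logb 2 x) - (1 - x) * Real.logb 2 (1 - x) := by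
  have h1 : x * Real.logb 2 x ≤ 0 := by
    rcases eq_or_lt_of_le hx1 with h | h
    · rw [h]; simp
    · exact mul_nonpos_of_nonneg_of_nonpos hx0.le
        (Real.logb_nonpos one_lt_two hx0.le hx1)
  have h2 : (1 - x) * Real.logb 2 (1 - x) ≤ 0 := by
    rcases eq_or_lt_of_le hx1 with h | h
    · simp [← h]
    · exact mul_nonpos_of_nonneg_of_nonpos (by linarith)
        (Real.logb_nonpos one_lt_two (by linarith) (by linarith))
  linarith

/-- Let `p : Fin n → ℝ` with `0 < p i ≤ 1`, and let `0 < θ < 1`.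
Then the total probability of items below the threshold `θ` satisfies
`∑_{i : p i ≤ θ} p i ≤ H / (−log₂ θ)`, where `H = ∑ i, h (p i)` is the entropy of
the defectivity vector (with `h` the binary entropy function). -/
theorem discarded_mass_entropy_bound {n : ℕ} (p : Fin n → ℝ)
    (hp : ∀ i, 0 < p i ∧ p i ≤ 1) (θ : ℝ) (hθ : 0 < θ) (hθ1 : θ < 1) :
    ∑ i ∈ Finset.univ.filter (fun i => p i ≤ θ), p i ≤
      (∑ i, (-(p i * Real.logb 2 (p i)) - (1 - p i) * Real.logb 2 (1 - p i)))
        / (-Real.logb 2 θ) := by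
  have hc : 0 < -Real.logb 2 θ := by
    have := Real.logb_neg one_lt_two hθ hθ1
    linarith
  rw [le_div_iff₀ hc]
  calc (∑ i ∈ Finset.univ.filter (fun i => p i ≤ θ), p i) * (-Real.logb 2 θ)
      = ∑ i ∈ Finset.univ.filter (fun i => p i ≤ θ), p i * (-Real.logb 2 θ) := by
        rw [Finset.sum_mul]
    _ ≤ ∑ i ∈ Finset.univ.filter (fun i => p i ≤ θ),
          (-(p i * Real.logb 2 (p i)) - (1 - p i) * Real.logb 2 (1 - p i)) := by
        apply Finset.sum_le_sum
        intro i hi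
        obtain ⟨hpi0, hpi1⟩ := hp i
        have hiθ : p i ≤ θ := (Finset.mem_filter.mp hi).2
        have hlog : Real.logb 2 (p i) ≤ Real.logb 2 θ :=
          Real.logb_le_logb_of_le one_lt_two hpi0 hiθ
        have h2 : (1 - p i) * Real.logb 2 (1 - p i) ≤ 0 := by
          have hlt : p i < 1 := lt_of_le_of_lt hiθ hθ1
          exact mul_nonpos_of_nonneg_of_nonpos (by linarith)
            (Real.logb_nonpos one_lt_two (by linarith) (by linarith))
        nlinarith [mul_le_mul_of_nonneg_left hlog hpi0.le]
    _ ≤ ∑ i, (-(p i * Real.logb 2 (p i)) - (1 - p i) * Real.logb 2 (1 - p i)) := by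
        apply Finset.sum_le_sum_of_subset_of_nonneg (Finset.filter_subset _ _)
        intro i _ _
        exact h_nonneg (p i) (hp i).1 (hp i).2
end

section
/- Let p : Fin n → ℝ with 0 < p i ≤ 1 for all i, let H = ∑_i h(p i) with H > 0, and let 0 < P_e ≤ 1. Define the threshold θ = θ(P_e) by −log₂ θ = min( log₂(2n/P_e), 2H/P_e ). Let (U i) be independent Bernoulli random variables with P(U i = 1) = p i. Then the probability that some item i with p i ≤ θ is defective satisfies P(∃ i, p i ≤ θ and U i = 1) ≤ P_e / 2. -/
open MeasureTheory ProbabilityTheory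

/-- With threshold `θ = θ(P_e)` defined by
`−log₂ θ = min (log₂ (2n/P_e), 2H/P_e)`, the probability that some item of
probability at most `θ` is defective is at most `P_e / 2`. -/
theorem truncation_error_bound {n : ℕ} (p : Fin n → ℝ)
    (hp : ∀ i, 0 < p i ∧ p i ≤ 1)
    (H : ℝ)
    (hH : H = ∑ i, (-(p i * Real.logb 2 (p i)) - (1 - p i) * Real.logb 2 (1 - p i)))
    (hHpos : 0 < H)
    (P_e : ℝ) (hPe : 0 < P_e) (hPe1 : P_e ≤ 1)
    (θ : ℝ) (hθpos : 0 < θ)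
    (hθ : -Real.logb 2 θ = min (Real.logb 2 (2 * n / P_e)) (2 * H / P_e))
    {Ω : Type*} [MeasurableSpace Ω] (μ : Measure Ω) [IsProbabilityMeasure μ]
    (U : Fin n → Ω → Bool) (hUmeas : ∀ i, Measurable (U i))
    (hUindep : iIndepFun U μ)
    (hUp : ∀ i, μ {ω | U i ω = true} = ENNReal.ofReal (p i)) :
    μ {ω | ∃ i, p i ≤ θ ∧ U i ω = true} ≤ ENNReal.ofReal (P_e / 2) := by
  classical
  -- Union bound
  have hsub : {ω | ∃ i, p i ≤ θ ∧ U i ω = true} ⊆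
      ⋃ i, {ω | p i ≤ θ ∧ U i ω = true} := by
    intro ω hω
    obtain ⟨i, h⟩ := hω
    exact Set.mem_iUnion.2 ⟨i, h⟩
  have h1 : μ {ω | ∃ i, p i ≤ θ ∧ U i ω = true} ≤
      ∑ i, μ {ω | p i ≤ θ ∧ U i ω = true} :=
    (measure_mono hsub).trans (measure_iUnion_fintype_le μ _)
  have h2 : ∀ i, μ {ω | p i ≤ θ ∧ U i ω = true} ≤
      ENNReal.ofReal (if p i ≤ θ then p i else 0) := by
    intro i
    by_cases h : p i ≤ θ
    · simp only [h, if_true]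
      rw [← hUp i]
      exact measure_mono fun ω hω => hω.2
    · have he : {ω | p i ≤ θ ∧ U i ω = true} = ∅ := by
        ext ω; simp [h]
      simp [he, h]
  have h3 : μ {ω | ∃ i, p i ≤ θ ∧ U i ω = true} ≤
      ENNReal.ofReal (∑ i, if p i ≤ θ then p i else 0) := by
    refine h1.trans ?_
    rw [ENNReal.ofReal_sum_of_nonneg (fun i _ => by
      by_cases h : p i ≤ θ <;> simp [h, (hp i).1.le])]
    exact Finset.sum_le_sum fun i _ => h2 i
  refine h3.trans (ENNReal.ofReal_le_ofReal ?_)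
  -- Real inequality
  rcases min_cases (Real.logb 2 (2 * n / P_e)) (2 * H / P_e) with ⟨hmin, _⟩ | ⟨hmin, _⟩
  · -- θ = P_e / (2n)
    by_cases hn : n = 0
    · subst hn
      simp
      positivity
    · have hn1 : (1:ℝ) ≤ (n:ℝ) := by
        exact_mod_cast Nat.one_le_iff_ne_zero.2 hn
      have hnpos : (0:ℝ) < n := lt_of_lt_of_le one_pos hn1
      have hq : (0:ℝ) < P_e / (2 * n) := by positivity
      have hθeq : θ = P_e / (2 * n) := by
        have hlog : Real.logb 2 θ = Real.logb 2 (P_e / (2 * n)) := by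
          have hh : -Real.logb 2 θ = Real.logb 2 (2 * n / P_e) := hθ.trans hmin
          have : Real.logb 2 θ = -Real.logb 2 (2 * n / P_e) := by linarith
          rw [this, ← Real.logb_inv]
          congr 1
          field_simp
        calc θ = (2:ℝ) ^ Real.logb 2 θ := (Real.rpow_logb (by norm_num) (by norm_num) hθpos).symm
          _ = (2:ℝ) ^ Real.logb 2 (P_e / (2 * n)) := by rw [hlog]
          _ = P_e / (2 * n) := Real.rpow_logb (by norm_num) (by norm_num) hq
      have hsum : ∑ i, (if p i ≤ θ then p i else 0) ≤ ∑ _i : Fin n, θ := by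
        refine Finset.sum_le_sum fun i _ => ?_
        by_cases h : p i ≤ θ <;> simp [h, le_of_lt hθpos]
      refine hsum.trans ?_
      rw [Finset.sum_const, Finset.card_univ, Fintype.card_fin, nsmul_eq_mul, hθeq]
      have : (n:ℝ) * (P_e / (2 * n)) = P_e / 2 := by
        field_simp
      exact le_of_eq this
  · -- θ bound via entropy
    have hlogθ : -Real.logb 2 θ = 2 * H / P_e := by rw [hθ, hmin]
    have hM : 0 < 2 * H / P_e := by positivity
    have hhnn : ∀ i, 0 ≤ -(p i * Real.logb 2 (p i)) - (1 - p i) * Real.logb 2 (1 - p i) := by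
      intro i
      obtain ⟨h0, h1⟩ := hp i
      have ha : p i * Real.logb 2 (p i) ≤ 0 :=
        mul_nonpos_of_nonneg_of_nonpos (le_of_lt h0)
          (Real.logb_nonpos (by norm_num) (le_of_lt h0) h1)
      have hb : (1 - p i) * Real.logb 2 (1 - p i) ≤ 0 :=
        mul_nonpos_of_nonneg_of_nonpos (by linarith)
          (Real.logb_nonpos (by norm_num) (by linarith) (by linarith))
      linarith
    have hterm : ∀ i, (if p i ≤ θ then p i else 0) * (2 * H / P_e) ≤
        -(p i * Real.logb 2 (p i)) - (1 - p i) * Real.logb 2 (1 - p i) := by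
      intro i
      by_cases h : p i ≤ θ
      · simp only [h, if_true]
        obtain ⟨h0, h1⟩ := hp i
        have hmono : Real.logb 2 (p i) ≤ Real.logb 2 θ :=
          Real.logb_le_logb_of_le (by norm_num) h0 h
        have h5 : p i * (2 * H / P_e) ≤ p i * (-Real.logb 2 (p i)) := by
          apply mul_le_mul_of_nonneg_left _ (le_of_lt h0)
          rw [← hlogθ]
          linarith
        have hb : (1 - p i) * Real.logb 2 (1 - p i) ≤ 0 :=
          mul_nonpos_of_nonneg_of_nonpos (by linarith)
            (Real.logb_nonpos (by norm_num) (by linarith) (by linarith))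
        nlinarith
      · simp only [h, if_false, zero_mul]
        exact hhnn i
    have hsumM : (∑ i, (if p i ≤ θ then p i else 0)) * (2 * H / P_e) ≤ H := by
      rw [Finset.sum_mul]
      calc ∑ i, (if p i ≤ θ then p i else 0) * (2 * H / P_e)
          ≤ ∑ i, (-(p i * Real.logb 2 (p i)) - (1 - p i) * Real.logb 2 (1 - p i)) :=
            Finset.sum_le_sum fun i _ => hterm i
        _ = H := hH.symm
    have hfinal : (P_e / 2) * (2 * H / P_e) = H := by
      field_simp
    rw [← mul_le_mul_iff_of_pos_right hM, hfinal]
    exact hsumM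
end

section
/- Let 0 < θ < 1/2, let Γ > 1, and let p : Fin n → ℝ satisfy θ < p i ≤ 1 for all i. Write μ = ∑_i p i. Then there exists G ∈ ℕ and a partition of Fin n into pairwise disjoint nonempty sets S_1, …, S_G covering Fin n, such that: (a) each S_j satisfies the Bounded Ratio Condition with constant Γ, i.e. p k / p i ≤ Γ for all i, k ∈ S_j; (b) each S_j has total probability P_j = ∑_{i∈S_j} p i ≤ 1; and (c) G ≤ 2μ + (−log₂(2θ))/(log₂ Γ) + 1. -/
lemma extract_half {n : ℕ} (p : Fin n → ℝ) (T : Finset (Fin n))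
    (hhalf : ∀ i ∈ T, p i ≤ 1/2) (hsum : 1/2 ≤ ∑ i ∈ T, p i) :
    ∃ U ⊆ T, U.Nonempty ∧ 1/2 ≤ ∑ i ∈ U, p i ∧ ∑ i ∈ U, p i ≤ 1 := by
  classical
  set F := T.powerset.filter (fun U => 1/2 ≤ ∑ i ∈ U, p i) with hF
  have hTF : T ∈ F := Finset.mem_filter.mpr ⟨Finset.mem_powerset_self T, hsum⟩
  obtain ⟨U, hUF, hmin⟩ := F.exists_min_image Finset.card ⟨T, hTF⟩
  rw [hF, Finset.mem_filter, Finset.mem_powerset] at hUF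
  obtain ⟨hUT, hUsum⟩ := hUF
  have hUne : U.Nonempty := by
    rcases U.eq_empty_or_nonempty with h | h
    · exfalso; rw [h] at hUsum; simp at hUsum; linarith
    · exact h
  refine ⟨U, hUT, hUne, hUsum, ?_⟩
  obtain ⟨u, hu⟩ := hUne
  have herase : ∑ i ∈ U.erase u, p i < 1/2 := by
    by_contra h
    push_neg at h
    have : (U.erase u) ∈ F := by
      rw [hF, Finset.mem_filter, Finset.mem_powerset]
      exact ⟨(U.erase_subset u).trans hUT, h⟩
    have := hmin _ this
    have hc : (U.erase u).card < U.card := Finset.card_erase_lt_of_mem hu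
    omega
  have := Finset.add_sum_erase U p hu
  have hpu : p u ≤ 1/2 := hhalf u (hUT hu)
  linarith

lemma pack {n : ℕ} (p : Fin n → ℝ) (hpos : ∀ i, 0 < p i)
    (T : Finset (Fin n)) (hhalf : ∀ i ∈ T, p i ≤ 1/2) :
    ∃ P : Finset (Finset (Fin n)),
      (∀ A ∈ P, A.Nonempty) ∧
      (∀ A ∈ P, ∑ i ∈ A, p i ≤ 1) ∧
      (∀ A ∈ P, ∀ B ∈ P, A ≠ B → Disjoint A B) ∧
      P.biUnion id = T ∧
      (P.card : ℝ) ≤ 2 * ∑ i ∈ T, p i + 1 := by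
  classical
  induction T using Finset.strongInduction with
  | _ T ih =>
    by_cases hle : ∑ i ∈ T, p i ≤ 1
    · rcases T.eq_empty_or_nonempty with rfl | hne
      · exact ⟨∅, by simp, by simp, by simp, by simp, by simp⟩
      · refine ⟨{T}, by simpa using hne, by simpa using hle, by simp, by simp, ?_⟩
        have : 0 < ∑ i ∈ T, p i := Finset.sum_pos (fun i _ => hpos i) hne
        simp only [Finset.card_singleton]
        push_cast
        linarith
    · push_neg at hle
      obtain ⟨U, hUT, hUne, hUlo, hUhi⟩ := extract_half p T hhalf (by linarith)
      have hss : T \ U ⊂ T := by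
        refine Finset.sdiff_ssubset hUT hUne
      obtain ⟨P, hPne, hPle, hPdisj, hPun, hPcard⟩ :=
        ih (T \ U) hss (fun i hi => hhalf i (Finset.mem_sdiff.mp hi).1)
      have hUnotP : U ∉ P := by
        intro hU
        obtain ⟨u, hu⟩ := hUne
        have : u ∈ P.biUnion id := Finset.mem_biUnion.mpr ⟨U, hU, hu⟩
        rw [hPun, Finset.mem_sdiff] at this
        exact this.2 hu
      refine ⟨insert U P, ?_, ?_, ?_, ?_, ?_⟩
      · intro A hA
        rcases Finset.mem_insert.mp hA with rfl | hA
        · exact hUne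
        · exact hPne A hA
      · intro A hA
        rcases Finset.mem_insert.mp hA with rfl | hA
        · exact hUhi
        · exact hPle A hA
      · intro A hA B hB hAB
        have hdU : ∀ C ∈ P, Disjoint U C := by
          intro C hC
          have hC' : C ⊆ T \ U := by
            intro x hx
            have : x ∈ P.biUnion id := Finset.mem_biUnion.mpr ⟨C, hC, hx⟩
            rwa [hPun] at this
          exact Finset.disjoint_left.mpr fun x hxU hxC =>
            (Finset.mem_sdiff.mp (hC' hxC)).2 hxU
        rcases Finset.mem_insert.mp hA with hA' | hA'
        · rcases Finset.mem_insert.mp hB with hB' | hB'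
          · exact absurd (hA'.trans hB'.symm) hAB
          · rw [hA']; exact hdU B hB'
        · rcases Finset.mem_insert.mp hB with hB' | hB'
          · rw [hB']; exact (hdU A hA').symm
          · exact hPdisj A hA' B hB' hAB
      · rw [Finset.biUnion_insert, hPun]
        simpa using Finset.union_sdiff_of_subset hUT
      · have hcard : (insert U P).card = P.card + 1 := Finset.card_insert_of_notMem hUnotP
        have hsumsplit : ∑ i ∈ T \ U, p i + ∑ i ∈ U, p i = ∑ i ∈ T, p i :=
          Finset.sum_sdiff hUT
        rw [hcard]
        push_cast
        linarith

lemma bandpack {n : ℕ} (p : Fin n → ℝ) (hpos : ∀ i, 0 < p i)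
    (b : Fin n → ℕ) (Sm : Finset (Fin n)) (hhalf : ∀ i ∈ Sm, p i ≤ 1/2) (m : ℕ) :
    ∃ P : Finset (Finset (Fin n)),
      (∀ A ∈ P, A.Nonempty) ∧
      (∀ A ∈ P, ∑ i ∈ A, p i ≤ 1) ∧
      (∀ A ∈ P, ∀ B ∈ P, A ≠ B → Disjoint A B) ∧
      P.biUnion id = Sm.filter (fun i => b i < m) ∧
      (∀ A ∈ P, ∀ i ∈ A, ∀ k ∈ A, b i = b k) ∧
      (P.card : ℝ) ≤ 2 * ∑ i ∈ Sm.filter (fun i => b i < m), p i + m := by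
  classical
  induction m with
  | zero => exact ⟨∅, by simp, by simp, by simp, by simp, by simp, by simp⟩
  | succ m ih =>
    obtain ⟨P, hPne, hPle, hPdisj, hPun, hPband, hPcard⟩ := ih
    obtain ⟨Q, hQne, hQle, hQdisj, hQun, hQcard⟩ :=
      pack p hpos (Sm.filter (fun i => b i = m)) (fun i hi => hhalf i (Finset.mem_filter.mp hi).1)
    -- membership characterizations
    have hmemP : ∀ A ∈ P, ∀ x ∈ A, x ∈ Sm ∧ b x < m := by
      intro A hA x hx
      have : x ∈ P.biUnion id := Finset.mem_biUnion.mpr ⟨A, hA, hx⟩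
      rw [hPun] at this
      exact Finset.mem_filter.mp this
    have hmemQ : ∀ A ∈ Q, ∀ x ∈ A, x ∈ Sm ∧ b x = m := by
      intro A hA x hx
      have : x ∈ Q.biUnion id := Finset.mem_biUnion.mpr ⟨A, hA, hx⟩
      rw [hQun] at this
      exact Finset.mem_filter.mp this
    have hPQdisj : ∀ A ∈ P, ∀ B ∈ Q, Disjoint A B := by
      intro A hA B hB
      refine Finset.disjoint_left.mpr fun x hxA hxB => ?_
      have h1 := (hmemP A hA x hxA).2
      have h2 := (hmemQ B hB x hxB).2
      omega
    have hPQsets : ∀ A, A ∈ P → A ∈ Q → False := by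
      intro A hA hB
      obtain ⟨x, hx⟩ := hPne A hA
      exact Finset.disjoint_left.mp (hPQdisj A hA A hB) hx hx
    have hfiltsplit : Sm.filter (fun i => b i < m + 1)
        = Sm.filter (fun i => b i < m) ∪ Sm.filter (fun i => b i = m) := by
      ext x
      simp only [Finset.mem_union, Finset.mem_filter]
      constructor
      · rintro ⟨hx, hb⟩
        rcases Nat.lt_succ_iff_lt_or_eq.mp hb with h | h
        · exact Or.inl ⟨hx, h⟩
        · exact Or.inr ⟨hx, h⟩
      · rintro (⟨hx, hb⟩ | ⟨hx, hb⟩) <;> exact ⟨hx, by omega⟩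
    have hfiltdisj : Disjoint (Sm.filter (fun i => b i < m)) (Sm.filter (fun i => b i = m)) := by
      refine Finset.disjoint_left.mpr fun x hx1 hx2 => ?_
      have h1 := (Finset.mem_filter.mp hx1).2
      have h2 := (Finset.mem_filter.mp hx2).2
      omega
    refine ⟨P ∪ Q, ?_, ?_, ?_, ?_, ?_, ?_⟩
    · intro A hA
      rcases Finset.mem_union.mp hA with h | h
      · exact hPne A h
      · exact hQne A h
    · intro A hA
      rcases Finset.mem_union.mp hA with h | h
      · exact hPle A h
      · exact hQle A h
    · intro A hA B hB hAB
      rcases Finset.mem_union.mp hA with hA' | hA' <;> rcases Finset.mem_union.mp hB with hB' | hB'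
      · exact hPdisj A hA' B hB' hAB
      · exact hPQdisj A hA' B hB'
      · exact (hPQdisj B hB' A hA').symm
      · exact hQdisj A hA' B hB' hAB
    · rw [hfiltsplit, ← hPun, ← hQun]
      ext x
      simp only [Finset.mem_biUnion, Finset.mem_union, id]
      constructor
      · rintro ⟨A, hA | hA, hx⟩
        exacts [Or.inl ⟨A, hA, hx⟩, Or.inr ⟨A, hA, hx⟩]
      · rintro (⟨A, hA, hx⟩ | ⟨A, hA, hx⟩)
        exacts [⟨A, Or.inl hA, hx⟩, ⟨A, Or.inr hA, hx⟩]
    · intro A hA i hi k hk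
      rcases Finset.mem_union.mp hA with h | h
      · have h1 := (hmemP A h i hi).2
        have h2 := (hmemP A h k hk).2
        -- not enough: need same band within A for P members
        exact hPband A h i hi k hk
      · have h1 := (hmemQ A h i hi).2
        have h2 := (hmemQ A h k hk).2
        omega
    · have hcard := Finset.card_union_le P Q
      have hsum : ∑ i ∈ Sm.filter (fun i => b i < m + 1), p i
          = ∑ i ∈ Sm.filter (fun i => b i < m), p i + ∑ i ∈ Sm.filter (fun i => b i = m), p i := by
        rw [hfiltsplit, Finset.sum_union hfiltdisj]
      rw [hsum]
      push_cast
      have : ((P ∪ Q).card : ℝ) ≤ (P.card : ℝ) + (Q.card : ℝ) := by exact_mod_cast hcard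
      linarith


/-- After discarding items of probability at most `θ` (so
`θ < p i ≤ 1` for all remaining items), the population can be partitioned into
`G` search sets, each satisfying the Bounded Ratio Condition with constant `Γ`
and having total probability at most `1`, where
`G ≤ 2μ + (−log₂(2θ))/log₂ Γ + 1` with `μ = ∑ i, p i`. -/
theorem splitting_into_search_sets {n : ℕ} (θ Γ : ℝ)
    (hθpos : 0 < θ) (hθhalf : θ < 1 / 2) (hΓ : 1 < Γ)
    (p : Fin n → ℝ) (hp : ∀ i, θ < p i ∧ p i ≤ 1) :
    ∃ (G : ℕ) (S : Fin G → Finset (Fin n)),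
      (∀ j, (S j).Nonempty) ∧
      (∀ j k, j ≠ k → Disjoint (S j) (S k)) ∧
      (∀ i, ∃ j, i ∈ S j) ∧
      (∀ j, ∀ i ∈ S j, ∀ k ∈ S j, p k / p i ≤ Γ) ∧
      (∀ j, ∑ i ∈ S j, p i ≤ 1) ∧
      (G : ℝ) ≤ 2 * (∑ i, p i) + (-Real.logb 2 (2 * θ)) / Real.logb 2 Γ + 1 := by
  classical
  have hpos : ∀ i, 0 < p i := fun i => hθpos.trans (hp i).1
  have hlogΓ : 0 < Real.log Γ := Real.log_pos hΓ
  set L : ℝ := Real.logb Γ (1 / (2 * θ)) with hLdef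
  have h2θ : 0 < 2 * θ := by linarith
  have h2θ1 : 2 * θ < 1 := by linarith
  have hL0 : 0 ≤ L := Real.logb_nonneg hΓ (by rw [le_div_iff₀ h2θ]; linarith)
  set b : Fin n → ℕ := fun i => (⌊Real.logb Γ (p i / θ)⌋).toNat with hbdef
  -- ratio within a band
  have hratio : ∀ i k, b i = b k → p k / p i ≤ Γ := by
    intro i k hik
    have hxi : 1 < p i / θ := (one_lt_div hθpos).mpr (hp i).1
    have hxk : 1 < p k / θ := (one_lt_div hθpos).mpr (hp k).1
    have hfi : 0 ≤ Real.logb Γ (p i / θ) := Real.logb_nonneg hΓ hxi.le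
    have hfk : 0 ≤ Real.logb Γ (p k / θ) := Real.logb_nonneg hΓ hxk.le
    have hfloor : ⌊Real.logb Γ (p k / θ)⌋ = ⌊Real.logb Γ (p i / θ)⌋ := by
      have h1 : (0:ℤ) ≤ ⌊Real.logb Γ (p i / θ)⌋ := Int.floor_nonneg.mpr hfi
      have h2 : (0:ℤ) ≤ ⌊Real.logb Γ (p k / θ)⌋ := Int.floor_nonneg.mpr hfk
      have h3 : (⌊Real.logb Γ (p i / θ)⌋).toNat = (⌊Real.logb Γ (p k / θ)⌋).toNat := hik
      omega
    have hlt : Real.logb Γ (p k / θ) - Real.logb Γ (p i / θ) < 1 := by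
      have h1 : Real.logb Γ (p k / θ) < ⌊Real.logb Γ (p k / θ)⌋ + 1 := Int.lt_floor_add_one _
      have h2 : (⌊Real.logb Γ (p i / θ)⌋ : ℝ) ≤ Real.logb Γ (p i / θ) := Int.floor_le _
      rw [hfloor] at h1
      linarith
    have hdiv : Real.logb Γ (p k / p i) < 1 := by
      have h1 : Real.logb Γ ((p k / θ) / (p i / θ)) =
          Real.logb Γ (p k / θ) - Real.logb Γ (p i / θ) :=
        Real.logb_div (div_pos (hpos k) hθpos).ne' (div_pos (hpos i) hθpos).ne'
      have h2 : (p k / θ) / (p i / θ) = p k / p i := by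
        rw [div_div_div_comm, div_self hθpos.ne', div_one]
      rw [h2] at h1
      linarith
    have := (Real.logb_lt_iff_lt_rpow hΓ (div_pos (hpos k) (hpos i))).mp hdiv
    rw [Real.rpow_one] at this
    exact this.le
  -- small items lie in bands below M
  set M : ℕ := (⌊L⌋).toNat + 1 with hMdef
  have hbM : ∀ i, p i ≤ 1/2 → b i < M := by
    intro i hi
    have harg : p i / θ ≤ 1 / (2 * θ) := by
      rw [div_le_div_iff₀ hθpos h2θ]
      nlinarith
    have hmono : Real.logb Γ (p i / θ) ≤ L := by
      rw [hLdef]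
      exact Real.logb_le_logb_of_le hΓ (div_pos (hpos i) hθpos) harg
    have : ⌊Real.logb Γ (p i / θ)⌋ ≤ ⌊L⌋ := Int.floor_le_floor hmono
    have : b i ≤ (⌊L⌋).toNat := by
      simp only [hbdef]
      omega
    omega
  have hMreal : (M : ℝ) ≤ L + 1 := by
    have h2 : ((⌊L⌋ : ℤ) : ℝ) ≤ L := Int.floor_le L
    have h1 : ((⌊L⌋).toNat : ℝ) = ((⌊L⌋ : ℤ) : ℝ) := by
      exact_mod_cast congrArg (fun z : ℤ => (z : ℝ)) (Int.toNat_of_nonneg (Int.floor_nonneg.mpr hL0))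
    have h3 : (M : ℝ) = ((⌊L⌋).toNat : ℝ) + 1 := by rw [hMdef]; push_cast; ring
    rw [h3, h1]; linarith
  -- L equals the stated expression
  have hLeq : L = (-Real.logb 2 (2 * θ)) / Real.logb 2 Γ := by
    rw [hLdef, Real.logb, Real.logb, Real.logb, one_div, Real.log_inv]
    have hlog2 : Real.log 2 ≠ 0 := (Real.log_pos one_lt_two).ne'
    field_simp
  -- split population
  set Big : Finset (Fin n) := Finset.univ.filter (fun i => 1/2 < p i) with hBigdef
  set Sm : Finset (Fin n) := Finset.univ.filter (fun i => p i ≤ 1/2) with hSmdef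
  obtain ⟨P, hPne, hPle, hPdisj, hPun, hPband, hPcard⟩ :=
    bandpack p hpos b Sm (fun i hi => (Finset.mem_filter.mp hi).2) M
  have hSmfilt : Sm.filter (fun i => b i < M) = Sm := by
    apply Finset.filter_true_of_mem
    intro i hi
    exact hbM i (Finset.mem_filter.mp hi).2
  rw [hSmfilt] at hPun hPcard
  set Q : Finset (Finset (Fin n)) := Big.image (fun i => {i}) with hQdef
  have hmemP : ∀ A ∈ P, ∀ x ∈ A, x ∈ Sm := by
    intro A hA x hx
    have : x ∈ P.biUnion id := Finset.mem_biUnion.mpr ⟨A, hA, hx⟩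
    rwa [hPun] at this
  have hPQdisjoint : ∀ A ∈ P, ∀ B ∈ Q, Disjoint A B := by
    intro A hA B hB
    obtain ⟨x, hxBig, rfl⟩ := Finset.mem_image.mp hB
    refine Finset.disjoint_left.mpr fun y hyA hyB => ?_
    rw [Finset.mem_singleton] at hyB
    subst hyB
    have h1 := (Finset.mem_filter.mp (hmemP A hA y hyA)).2
    have h2 := (Finset.mem_filter.mp hxBig).2
    linarith
  set R : Finset (Finset (Fin n)) := P ∪ Q with hRdef
  have hRne : ∀ A ∈ R, A.Nonempty := by
    intro A hA
    rcases Finset.mem_union.mp hA with h | h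
    · exact hPne A h
    · obtain ⟨x, _, rfl⟩ := Finset.mem_image.mp h
      exact Finset.singleton_nonempty x
  have hRle : ∀ A ∈ R, ∑ i ∈ A, p i ≤ 1 := by
    intro A hA
    rcases Finset.mem_union.mp hA with h | h
    · exact hPle A h
    · obtain ⟨x, _, rfl⟩ := Finset.mem_image.mp h
      simpa using (hp x).2
  have hRdisj : ∀ A ∈ R, ∀ B ∈ R, A ≠ B → Disjoint A B := by
    intro A hA B hB hAB
    rcases Finset.mem_union.mp hA with hA' | hA' <;> rcases Finset.mem_union.mp hB with hB' | hB'
    · exact hPdisj A hA' B hB' hAB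
    · exact hPQdisjoint A hA' B hB'
    · exact (hPQdisjoint B hB' A hA').symm
    · obtain ⟨x, _, rfl⟩ := Finset.mem_image.mp hA'
      obtain ⟨y, _, rfl⟩ := Finset.mem_image.mp hB'
      have hxy : x ≠ y := fun h => hAB (by rw [h])
      exact Finset.disjoint_singleton.mpr hxy
  have hRratio : ∀ A ∈ R, ∀ i ∈ A, ∀ k ∈ A, p k / p i ≤ Γ := by
    intro A hA i hi k hk
    rcases Finset.mem_union.mp hA with h | h
    · exact hratio i k (hPband A h i hi k hk)
    · obtain ⟨x, _, rfl⟩ := Finset.mem_image.mp h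
      rw [Finset.mem_singleton] at hi hk
      rw [hi, hk, div_self (hpos x).ne']
      exact hΓ.le
  have hRcover : ∀ i, ∃ A ∈ R, i ∈ A := by
    intro i
    by_cases h : p i ≤ 1/2
    · have : i ∈ Sm := Finset.mem_filter.mpr ⟨Finset.mem_univ i, h⟩
      rw [← hPun] at this
      obtain ⟨A, hA, hiA⟩ := Finset.mem_biUnion.mp this
      exact ⟨A, Finset.mem_union_left _ hA, hiA⟩
    · push_neg at h
      refine ⟨{i}, Finset.mem_union_right _ ?_, Finset.mem_singleton_self i⟩
      exact Finset.mem_image.mpr ⟨i, Finset.mem_filter.mpr ⟨Finset.mem_univ i, h⟩, rfl⟩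
  -- cardinality bound
  have hQcard : (Q.card : ℝ) ≤ 2 * ∑ i ∈ Big, p i := by
    have h1 : Q.card = Big.card :=
      Finset.card_image_of_injective _ (fun x y h => Finset.singleton_injective h)
    rw [h1]
    have h2 : (Big.card : ℝ) = ∑ _i ∈ Big, (1:ℝ) := by simp
    rw [h2, Finset.mul_sum]
    apply Finset.sum_le_sum
    intro i hi
    have := (Finset.mem_filter.mp hi).2
    linarith
  have hsumsplit : ∑ i ∈ Sm, p i + ∑ i ∈ Big, p i = ∑ i, p i := by
    rw [hSmdef, hBigdef]
    rw [← Finset.sum_filter_add_sum_filter_not Finset.univ (fun i => p i ≤ 1/2) p]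
    congr 1
    apply Finset.sum_congr _ (fun _ _ => rfl)
    apply Finset.filter_congr
    intro i _
    simp [not_le]
  have hRcard : (R.card : ℝ) ≤ 2 * (∑ i, p i) + L + 1 := by
    have h1 := Finset.card_union_le P Q
    have h2 : ((R.card : ℕ) : ℝ) ≤ (P.card : ℝ) + (Q.card : ℝ) := by exact_mod_cast h1
    have : (P.card : ℝ) ≤ 2 * ∑ i ∈ Sm, p i + M := hPcard
    linarith
  -- convert to indexed family
  refine ⟨R.card, fun j => (R.equivFin.symm j : Finset (Fin n)), ?_, ?_, ?_, ?_, ?_, ?_⟩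
  · intro j
    exact hRne _ (R.equivFin.symm j).2
  · intro j k hjk
    apply hRdisj _ (R.equivFin.symm j).2 _ (R.equivFin.symm k).2
    intro h
    exact hjk (by
      have : R.equivFin.symm j = R.equivFin.symm k := Subtype.ext h
      exact R.equivFin.symm.injective this)
  · intro i
    obtain ⟨A, hA, hiA⟩ := hRcover i
    refine ⟨R.equivFin ⟨A, hA⟩, ?_⟩
    simpa using hiA
  · intro j
    exact hRratio _ (R.equivFin.symm j).2
  · intro j
    exact hRle _ (R.equivFin.symm j).2
  · rw [← hLeq]
    linarith
end

section
/- Let 0 < θ < 1/2 and let p : Fin n → ℝ satisfy θ < p i ≤ 1 for all i, with μ = ∑_i p i > 0. Then there exists G ∈ ℕ and a partition of Fin n into pairwise disjoint nonempty sets S_1, …, S_G covering Fin n, with each P_j = ∑_{i∈S_j} p i ≤ 1, such that ∑_{j=1}^G ( 1 + ∑_{i∈S_j} p i · ⌈log₂(P_j / p i)⌉ ) ≤ H + 3μ + 1 + 2·√( μ · (−log₂(2θ)) ), where H = ∑_i h(p i) and h is the binary entropy function. -/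
open Finset

private lemma exists_good_partition {n : ℕ} (p : Fin n → ℝ)
    (hp : ∀ i, 0 < p i ∧ p i ≤ 1) (s : Finset (Fin n)) :
    ∃ P : Finset (Finset (Fin n)),
      (∀ t ∈ P, t.Nonempty) ∧
      (∀ t ∈ P, t ⊆ s) ∧
      (∀ t ∈ P, ∑ i ∈ t, p i ≤ 1) ∧
      (∀ t ∈ P, ∀ t' ∈ P, t ≠ t' → Disjoint t t') ∧
      (∀ i ∈ s, ∃ t ∈ P, i ∈ t) ∧
      (∀ t ∈ P, ∀ t' ∈ P, t ≠ t' → 1 < (∑ i ∈ t, p i) + ∑ i ∈ t', p i) := by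
  induction s using Finset.strongInduction with
  | _ s ih =>
    rcases s.eq_empty_or_nonempty with rfl | ⟨i0, hi0⟩
    · exact ⟨∅, by simp, by simp, by simp, by simp, by simp, by simp⟩
    · set C := s.powerset.filter (fun t => t.Nonempty ∧ ∑ i ∈ t, p i ≤ 1) with hC
      have hCne : C.Nonempty := ⟨{i0}, by
        simp only [hC, Finset.mem_filter, Finset.mem_powerset,
          Finset.singleton_subset_iff, Finset.singleton_nonempty, true_and]
        exact ⟨hi0, by simpa using (hp i0).2⟩⟩
      obtain ⟨t0, ht0C, ht0max⟩ := C.exists_maximal hCne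
      rw [hC, Finset.mem_filter, Finset.mem_powerset] at ht0C
      obtain ⟨ht0s, ht0ne, ht0sum⟩ := ht0C
      have hkey : ∀ i ∈ s, i ∉ t0 → 1 < (∑ j ∈ t0, p j) + p i := by
        intro i his hit
        by_contra h
        push_neg at h
        have hmem : insert i t0 ∈ C := by
          rw [hC, Finset.mem_filter, Finset.mem_powerset]
          refine ⟨Finset.insert_subset his ht0s, Finset.insert_nonempty _ _, ?_⟩
          rw [Finset.sum_insert hit]
          linarith
        exact not_le_of_gt (Finset.lt_iff_ssubset.mpr (Finset.ssubset_insert hit)) (ht0max hmem (Finset.subset_insert i t0))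
      have hss : s \ t0 ⊂ s := Finset.sdiff_ssubset ht0s ht0ne
      obtain ⟨P', h1, h2, h3, h4, h5, h6⟩ := ih _ hss
      have hdisj0 : ∀ t' ∈ P', Disjoint t0 t' :=
        fun t' ht' => Finset.disjoint_left.mpr fun a ha ha' =>
          (Finset.mem_sdiff.mp (h2 _ ht' ha')).2 ha
      have ht0nP' : t0 ∉ P' := by
        intro h
        obtain ⟨i, hi⟩ := ht0ne
        exact (Finset.mem_sdiff.mp (h2 _ h hi)).2 hi
      have hcross : ∀ t' ∈ P', 1 < (∑ i ∈ t0, p i) + ∑ i ∈ t', p i := by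
        intro t' ht'
        obtain ⟨i, hi⟩ := h1 _ ht'
        have hisd := Finset.mem_sdiff.mp (h2 _ ht' hi)
        have hle : p i ≤ ∑ j ∈ t', p j :=
          Finset.single_le_sum (fun j _ => (hp j).1.le) hi
        have := hkey i hisd.1 hisd.2
        linarith
      refine ⟨insert t0 P', ?_, ?_, ?_, ?_, ?_, ?_⟩
      · intro t ht
        rcases Finset.mem_insert.mp ht with rfl | ht
        · exact ht0ne
        · exact h1 _ ht
      · intro t ht
        rcases Finset.mem_insert.mp ht with rfl | ht
        · exact ht0s
        · exact (h2 _ ht).trans (Finset.sdiff_subset)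
      · intro t ht
        rcases Finset.mem_insert.mp ht with rfl | ht
        · exact ht0sum
        · exact h3 _ ht
      · intro t ht t' ht' hne
        rcases Finset.mem_insert.mp ht with heq | ht
        · rcases Finset.mem_insert.mp ht' with heq' | ht'
          · exact absurd (heq.trans heq'.symm) hne
          · rw [heq]; exact hdisj0 _ ht'
        · rcases Finset.mem_insert.mp ht' with heq' | ht'
          · rw [heq']; exact (hdisj0 _ ht).symm
          · exact h4 _ ht _ ht' hne
      · intro i his
        by_cases hit : i ∈ t0
        · exact ⟨t0, Finset.mem_insert_self _ _, hit⟩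
        · obtain ⟨t, htP, hit'⟩ := h5 i (Finset.mem_sdiff.mpr ⟨his, hit⟩)
          exact ⟨t, Finset.mem_insert_of_mem htP, hit'⟩
      · intro t ht t' ht' hne
        rcases Finset.mem_insert.mp ht with heq | ht
        · rcases Finset.mem_insert.mp ht' with heq' | ht'
          · exact absurd (heq.trans heq'.symm) hne
          · rw [heq]; exact hcross _ ht'
        · rcases Finset.mem_insert.mp ht' with heq' | ht'
          · rw [heq']; have := hcross _ ht; linarith
          · exact h6 _ ht _ ht' hne

private lemma card_bound {α : Type*} [DecidableEq α] (P : Finset (Finset α))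
    (σ : Finset α → ℝ) (hnn : ∀ t ∈ P, 0 ≤ σ t)
    (hpair : ∀ t ∈ P, ∀ t' ∈ P, t ≠ t' → 1 < σ t + σ t') :
    (P.card : ℝ) ≤ 2 * (∑ t ∈ P, σ t) + 1 := by
  set M := ∑ t ∈ P, σ t with hM
  have hM0 : 0 ≤ M := Finset.sum_nonneg hnn
  rcases le_or_gt P.card 1 with h | h
  · have : (P.card : ℝ) ≤ 1 := by exact_mod_cast h
    linarith
  · have hcard2 : (2 : ℝ) ≤ P.card := by exact_mod_cast h
    have hinner : ∀ t ∈ P,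
        ∑ t' ∈ P.erase t, (σ t + σ t') = ((P.card : ℝ) - 1) * σ t + (M - σ t) := by
      intro t ht
      rw [Finset.sum_add_distrib, Finset.sum_const, Finset.sum_erase_eq_sub ht,
        Finset.card_erase_of_mem ht, nsmul_eq_mul]
      have h1 : 1 ≤ P.card := le_of_lt h
      push_cast [Nat.cast_sub h1]
      ring
    have hlow : ∀ t ∈ P, ((P.card : ℝ) - 1) ≤ ∑ t' ∈ P.erase t, (σ t + σ t') := by
      intro t ht
      have hone : ∀ t' ∈ P.erase t, (1 : ℝ) ≤ σ t + σ t' := fun t' ht' =>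
        (hpair t ht t' (Finset.mem_of_mem_erase ht')
          (Ne.symm (Finset.ne_of_mem_erase ht'))).le
      calc ((P.card : ℝ) - 1) = ((P.erase t).card : ℝ) * 1 := by
            rw [Finset.card_erase_of_mem ht]
            push_cast [Nat.cast_sub (le_of_lt h)]
            ring
        _ ≤ ∑ t' ∈ P.erase t, (σ t + σ t') := by
            rw [mul_one]
            simpa using Finset.card_nsmul_le_sum (P.erase t) _ 1 hone
    have hkey : (P.card : ℝ) * ((P.card : ℝ) - 1) ≤ 2 * ((P.card : ℝ) - 1) * M := by
      have hL : (P.card : ℝ) * ((P.card : ℝ) - 1)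
          ≤ ∑ t ∈ P, ∑ t' ∈ P.erase t, (σ t + σ t') := by
        calc (P.card : ℝ) * ((P.card : ℝ) - 1)
            = ∑ _t ∈ P, ((P.card : ℝ) - 1) := by
              rw [Finset.sum_const, nsmul_eq_mul]
          _ ≤ _ := Finset.sum_le_sum hlow
      have hR : ∑ t ∈ P, ∑ t' ∈ P.erase t, (σ t + σ t')
          = 2 * ((P.card : ℝ) - 1) * M := by
        rw [Finset.sum_congr rfl hinner]
        rw [show (fun t => ((P.card : ℝ) - 1) * σ t + (M - σ t))
            = fun t => ((P.card : ℝ) - 2) * σ t + M by funext t; ring]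
        rw [Finset.sum_add_distrib, ← Finset.mul_sum, Finset.sum_const, nsmul_eq_mul,
          ← hM]
        ring
      linarith [hR ▸ hL]
    nlinarith
/-- After discarding items of probability at most `θ`, there is a
partition of the population into `G` search sets `S_1, …, S_G`, each of total
probability `P_j ≤ 1`, such that the expected total number of tests
`∑_j (1 + ∑_{i ∈ S_j} p i ⌈log₂ (P_j / p i)⌉)` is at most
`H + 3μ + 1 + 2 √(μ (−log₂ (2θ)))`. -/
theorem expected_total_tests_bound {n : ℕ} (θ : ℝ)
    (hθpos : 0 < θ) (hθhalf : θ < 1 / 2)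
    (p : Fin n → ℝ) (hp : ∀ i, θ < p i ∧ p i ≤ 1)
    (hμpos : 0 < ∑ i, p i) :
    ∃ (G : ℕ) (S : Fin G → Finset (Fin n)),
      (∀ j, (S j).Nonempty) ∧
      (∀ j k, j ≠ k → Disjoint (S j) (S k)) ∧
      (∀ i, ∃ j, i ∈ S j) ∧
      (∀ j, ∑ i ∈ S j, p i ≤ 1) ∧
      (∑ j, (1 + ∑ i ∈ S j, p i * (⌈Real.logb 2 ((∑ k ∈ S j, p k) / p i)⌉ : ℝ))) ≤
        (∑ i, (-(p i * Real.logb 2 (p i)) - (1 - p i) * Real.logb 2 (1 - p i)))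
          + 3 * (∑ i, p i) + 1
          + 2 * Real.sqrt ((∑ i, p i) * (-Real.logb 2 (2 * θ))) := by
  have hppos : ∀ i, 0 < p i ∧ p i ≤ 1 := fun i => ⟨hθpos.trans (hp i).1, (hp i).2⟩
  obtain ⟨P, hne, _hsub, hsum1, hdis, hcov, hpair⟩ :=
    exists_good_partition p hppos Finset.univ
  set F : Finset (Fin n) → ℝ :=
    fun t => 1 + ∑ i ∈ t, p i * (⌈Real.logb 2 ((∑ k ∈ t, p k) / p i)⌉ : ℝ) with hF
  refine ⟨P.card, fun j => ((P.equivFin.symm j : ↥P) : Finset (Fin n)),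
    fun j => hne _ (Finset.coe_mem _), ?_, ?_, fun j => hsum1 _ (Finset.coe_mem _), ?_⟩
  · intro j k hjk
    refine hdis _ (Finset.coe_mem _) _ (Finset.coe_mem _) ?_
    intro h
    exact hjk (P.equivFin.symm.injective (Subtype.ext h))
  · intro i
    obtain ⟨t, htP, hit⟩ := hcov i (Finset.mem_univ i)
    refine ⟨P.equivFin ⟨t, htP⟩, ?_⟩
    simp only [Equiv.symm_apply_apply]
    exact hit
  · -- main inequality
    have hPD : (↑P : Set (Finset (Fin n))).PairwiseDisjoint id :=
      fun a ha b hb hab => hdis a (Finset.mem_coe.mp ha) b (Finset.mem_coe.mp hb) hab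
    have hbi : P.biUnion id = Finset.univ := by
      ext i
      simp only [Finset.mem_biUnion, Finset.mem_univ, iff_true, id]
      exact hcov i (Finset.mem_univ i)
    have hsum_eq : ∑ j : Fin P.card, F ((P.equivFin.symm j : ↥P) : Finset (Fin n))
        = ∑ t ∈ P, F t := by
      rw [← Finset.sum_coe_sort P F]
      exact Equiv.sum_comp P.equivFin.symm (fun x : ↥P => F (x : Finset (Fin n)))
    have hsplit : ∀ g : Fin n → ℝ, ∑ t ∈ P, ∑ i ∈ t, g i = ∑ i, g i := by
      intro g
      rw [← hbi, Finset.sum_biUnion hPD]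
      rfl
    -- per-term bound inside each group
    have hterm : ∀ t ∈ P, ∀ i ∈ t,
        p i * (⌈Real.logb 2 ((∑ k ∈ t, p k) / p i)⌉ : ℝ)
          ≤ p i * (1 - Real.logb 2 (p i)) := by
      intro t ht i hit
      have hpi := hppos i
      have hσ : p i ≤ ∑ k ∈ t, p k :=
        Finset.single_le_sum (fun j _ => (hppos j).1.le) hit
      have hσpos : 0 < ∑ k ∈ t, p k := lt_of_lt_of_le hpi.1 hσ
      have hdivpos : 0 < (∑ k ∈ t, p k) / p i := div_pos hσpos hpi.1
      have hceil : (⌈Real.logb 2 ((∑ k ∈ t, p k) / p i)⌉ : ℝ)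
          ≤ Real.logb 2 ((∑ k ∈ t, p k) / p i) + 1 := (Int.ceil_lt_add_one _).le
      have hdivle : (∑ k ∈ t, p k) / p i ≤ 1 / p i := by
        gcongr
        · exact hpi.1.le
        · exact hsum1 t ht
      have hlog : Real.logb 2 ((∑ k ∈ t, p k) / p i) ≤ Real.logb 2 (1 / p i) :=
        Real.logb_le_logb_of_le one_lt_two hdivpos hdivle
      have hloginv : Real.logb 2 (1 / p i) = - Real.logb 2 (p i) := by
        rw [one_div, Real.logb_inv]
      have : (⌈Real.logb 2 ((∑ k ∈ t, p k) / p i)⌉ : ℝ) ≤ 1 - Real.logb 2 (p i) := by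
        rw [hloginv] at hlog; linarith
      exact mul_le_mul_of_nonneg_left this hpi.1.le
    have hsum2 : ∑ t ∈ P, F t
        ≤ (P.card : ℝ) + ∑ i, p i * (1 - Real.logb 2 (p i)) := by
      rw [hF]
      rw [Finset.sum_add_distrib, Finset.sum_const, nsmul_eq_mul, mul_one]
      have : ∑ t ∈ P, ∑ i ∈ t, p i * (⌈Real.logb 2 ((∑ k ∈ t, p k) / p i)⌉ : ℝ)
          ≤ ∑ t ∈ P, ∑ i ∈ t, p i * (1 - Real.logb 2 (p i)) :=
        Finset.sum_le_sum fun t ht => Finset.sum_le_sum (hterm t ht)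
      rw [hsplit (fun i => p i * (1 - Real.logb 2 (p i)))] at this
      linarith
    have hcard : (P.card : ℝ) ≤ 2 * (∑ i, p i) + 1 := by
      have := card_bound P (fun t => ∑ i ∈ t, p i)
        (fun t ht => Finset.sum_nonneg fun i _ => (hppos i).1.le)
        (fun t ht t' ht' hne' => hpair t ht t' ht' hne')
      rwa [hsplit p] at this
    have hent : ∑ i, p i * (1 - Real.logb 2 (p i))
        ≤ (∑ i, p i) +
          ∑ i, (-(p i * Real.logb 2 (p i)) - (1 - p i) * Real.logb 2 (1 - p i)) := by
      rw [← Finset.sum_add_distrib]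
      apply Finset.sum_le_sum
      intro i _
      have hpi := hppos i
      have h1 : Real.logb 2 (1 - p i) ≤ 0 :=
        Real.logb_nonpos one_lt_two (by linarith [hpi.2]) (by linarith [hpi.1])
      have h2 : (1 - p i) * Real.logb 2 (1 - p i) ≤ 0 :=
        mul_nonpos_of_nonneg_of_nonpos (by linarith [hpi.2]) h1
      nlinarith
    have hsqrt : 0 ≤ Real.sqrt ((∑ i, p i) * (-Real.logb 2 (2 * θ))) :=
      Real.sqrt_nonneg _
    calc (∑ j : Fin P.card, F ((P.equivFin.symm j : ↥P) : Finset (Fin n)))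
        = ∑ t ∈ P, F t := hsum_eq
      _ ≤ (P.card : ℝ) + ∑ i, p i * (1 - Real.logb 2 (p i)) := hsum2
      _ ≤ _ := by linarith
end

section
/- Let p : Fin n → ℝ with 0 < p i ≤ 1, and let (U i) be independent Bernoulli random variables with P(U i = 1) = p i. Let ℓ : Fin n → ℝ with 0 ≤ ℓ i ≤ M for all i, where M > 0. Set L = ∑_i ℓ i² · p i · (1 − p i), and let H > 0 satisfy ∑_i ℓ i · p i ≤ H. Assume L ≥ 4M², and set ψ = (L/(4M²))^{−1/3}. Then P( ∑_i ℓ i · (U i − p i) ≥ ψ·H ) ≤ exp( − (L/(4M²))^{1/3} ). -/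
open MeasureTheory ProbabilityTheory

/-- `e^x ≤ 1 + x + x²` for `|x| ≤ 1/2`. -/
lemma exp_le_one_add_add_sq {x : ℝ} (hx : |x| ≤ 1/2) : Real.exp x ≤ 1 + x + x ^ 2 := by
  have h1 : |x| ≤ 1 := hx.trans (by norm_num)
  have hb := Real.exp_bound h1 (n := 3) (by norm_num)
  have hs : ∑ m ∈ Finset.range 3, x ^ m / m.factorial = 1 + x + x ^ 2 / 2 := by
    simp [Finset.sum_range_succ, Nat.factorial]
  rw [hs] at hb
  have h2 := (abs_le.mp hb).2
  have hx3 : |x| ^ 3 ≤ (1/2) * x ^ 2 := by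
    have h4 : |x| ^ 3 = |x| * x ^ 2 := by rw [pow_succ, sq_abs]; ring
    rw [h4]
    nlinarith [sq_nonneg x, abs_nonneg x]
  have h5 : (Nat.factorial 3 : ℝ) = 6 := by norm_num [Nat.factorial]
  rw [h5] at h2
  nlinarith [h2, hx3]

/-- Integral of a function of a Bernoulli Bool random variable. -/
lemma bool_integral {Ω : Type*} [MeasurableSpace Ω] (μ : Measure Ω) [IsProbabilityMeasure μ]
    (U : Ω → Bool) (hU : Measurable U) {p : ℝ} (hp0 : 0 ≤ p) (hp1 : p ≤ 1)
    (hμ : μ {ω | U ω = true} = ENNReal.ofReal p) (g : Bool → ℝ) :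
    ∫ ω, g (U ω) ∂μ = p * g true + (1 - p) * g false := by
  have hs : MeasurableSet {ω | U ω = true} := hU (by trivial : MeasurableSet {true})
  have hfun : (fun ω => g (U ω)) =
      fun ω => Set.indicator {ω | U ω = true} (fun _ => g true - g false) ω + g false := by
    funext ω
    by_cases h : U ω = true <;> simp [Set.indicator, h]
  rw [hfun, integral_add ((integrable_const _).indicator hs) (integrable_const _),
    integral_indicator_const _ hs, integral_const]
  have : (μ {ω | U ω = true}).toReal = p := by rw [hμ, ENNReal.toReal_ofReal hp0]
  simp [measureReal_def, this]
  ring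

/-- mgf bound for a centered scaled Bernoulli. -/
lemma bern_mgf_le {lam l q : ℝ} (hl0 : 0 ≤ l) (hq0 : 0 < q) (hq1 : q ≤ 1)
    (hlam : 0 ≤ lam) (hsmall : lam * l ≤ 1/2) :
    q * Real.exp (lam * (l * ((1:ℝ) - q))) + (1 - q) * Real.exp (lam * (l * ((0:ℝ) - q)))
      ≤ Real.exp (lam ^ 2 * (l ^ 2 * (q * (1 - q)))) := by
  set x1 := lam * (l * ((1:ℝ) - q)) with hx1
  set x2 := lam * (l * ((0:ℝ) - q)) with hx2
  have hll : 0 ≤ lam * l := mul_nonneg hlam hl0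
  have hb1 : |x1| ≤ 1/2 := by
    rw [abs_le]; constructor <;> nlinarith
  have hb2 : |x2| ≤ 1/2 := by
    rw [abs_le]; constructor <;> nlinarith
  have e1 := exp_le_one_add_add_sq hb1
  have e2 := exp_le_one_add_add_sq hb2
  have e3 : 1 + lam ^ 2 * (l ^ 2 * (q * (1 - q))) ≤
      Real.exp (lam ^ 2 * (l ^ 2 * (q * (1 - q)))) := by
    have := Real.add_one_le_exp (lam ^ 2 * (l ^ 2 * (q * (1 - q))))
    linarith
  have key : q * Real.exp x1 + (1 - q) * Real.exp x2 ≤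
      1 + lam ^ 2 * (l ^ 2 * (q * (1 - q))) := by
    have h1 : q * Real.exp x1 ≤ q * (1 + x1 + x1 ^ 2) :=
      mul_le_mul_of_nonneg_left e1 hq0.le
    have h2 : (1 - q) * Real.exp x2 ≤ (1 - q) * (1 + x2 + x2 ^ 2) :=
      mul_le_mul_of_nonneg_left e2 (by linarith)
    have h3 : q * (1 + x1 + x1 ^ 2) + (1 - q) * (1 + x2 + x2 ^ 2) =
        1 + lam ^ 2 * (l ^ 2 * (q * (1 - q))) * (q + (1 - q)) := by
      rw [hx1, hx2]; ring
    nlinarith [h1, h2]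
  linarith

/-- Concentration of the number of tests: with independent
Bernoulli(`p i`) indicators `U i` and search lengths `0 ≤ ℓ i ≤ M`, setting
`L = ∑ i, ℓ i² p i (1 − p i)` and `ψ = (L/(4M²))^{−1/3}`, if `∑ i, ℓ i p i ≤ H`
and `L ≥ 4M²` then `P(∑ i, ℓ i (U i − p i) ≥ ψ H) ≤ exp (−(L/(4M²))^{1/3})`. -/
theorem tests_concentration_bound {n : ℕ} (p : Fin n → ℝ)
    (hp : ∀ i, 0 < p i ∧ p i ≤ 1)
    {Ω : Type*} [MeasurableSpace Ω] (μ : Measure Ω) [IsProbabilityMeasure μ]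
    (U : Fin n → Ω → Bool) (hUmeas : ∀ i, Measurable (U i))
    (hUindep : iIndepFun U μ)
    (hUp : ∀ i, μ {ω | U i ω = true} = ENNReal.ofReal (p i))
    (ℓ : Fin n → ℝ) (M : ℝ) (hM : 0 < M) (hℓ : ∀ i, 0 ≤ ℓ i ∧ ℓ i ≤ M)
    (L : ℝ) (hL : L = ∑ i, (ℓ i) ^ 2 * p i * (1 - p i))
    (H : ℝ) (hHpos : 0 < H) (hHbd : ∑ i, ℓ i * p i ≤ H)
    (hL4M : 4 * M ^ 2 ≤ L)
    (ψ : ℝ) (hψ : ψ = (L / (4 * M ^ 2)) ^ (-(1 / 3 : ℝ))) :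
    μ {ω | ψ * H ≤ ∑ i, ℓ i * ((if U i ω then (1 : ℝ) else 0) - p i)} ≤
      ENNReal.ofReal (Real.exp (-((L / (4 * M ^ 2)) ^ (1 / 3 : ℝ)))) := by
  have hM2 : (0:ℝ) < 4 * M ^ 2 := by positivity
  have hr0 : (0:ℝ) ≤ L / (4 * M ^ 2) := div_nonneg (le_trans hM2.le hL4M) hM2.le
  have hr1 : (1:ℝ) ≤ L / (4 * M ^ 2) := (one_le_div hM2).mpr hL4M
  set y : ℝ := (L / (4 * M ^ 2)) ^ (1/3 : ℝ) with hy
  have hy1 : 1 ≤ y := Real.one_le_rpow hr1 (by norm_num)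
  have hy0 : 0 < y := lt_of_lt_of_le one_pos hy1
  have hψy : ψ = 1 / y := by
    rw [hψ, Real.rpow_neg hr0, ← hy]
    exact (one_div y).symm
  have hy3 : y ^ 3 = L / (4 * M ^ 2) := by
    rw [hy, ← Real.rpow_natCast ((L / (4 * M ^ 2)) ^ (1/3:ℝ)) 3, ← Real.rpow_mul hr0]
    norm_num
  have hLeq : L = 4 * M ^ 2 * y ^ 3 := by
    rw [hy3]; field_simp
  clear_value y
  clear hy
  set lam : ℝ := 1 / (2 * M * y) with hlam
  have hlam0 : 0 < lam := by rw [hlam]; positivity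
  have hlamM : lam * M ≤ 1/2 := by
    rw [hlam, div_mul_eq_mul_div, one_mul, div_le_div_iff₀ (by positivity) (by norm_num)]
    nlinarith
  clear_value lam
  -- the summands as functions of the Bernoulli variables
  set f : Fin n → Bool → ℝ := fun i b => ℓ i * ((if b then (1:ℝ) else 0) - p i) with hf
  set X : Fin n → Ω → ℝ := fun i => f i ∘ U i with hX
  have hXmeas : ∀ i, Measurable (X i) := fun i =>
    (Measurable.of_discrete (f := f i)).comp (hUmeas i)
  have hXindep : iIndepFun X μ :=
    hUindep.comp f (fun i => Measurable.of_discrete)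
  have hXle : ∀ i ω, X i ω ≤ M := by
    intro i ω
    have h1 := (hℓ i).1; have h2 := (hℓ i).2; have h3 := (hp i).1
    simp only [hX, hf, Function.comp_apply]
    by_cases h : U i ω <;> simp [h] <;> nlinarith
  have hXint : ∀ i, Integrable (fun ω => Real.exp (lam * X i ω)) μ := by
    intro i
    refine (memLp_top_of_bound (((hXmeas i).const_mul lam).exp.aestronglyMeasurable)
      (Real.exp (lam * M)) (Filter.Eventually.of_forall fun ω => ?_)).integrable le_top
    rw [Real.norm_eq_abs, Real.abs_exp]
    exact Real.exp_le_exp.mpr (mul_le_mul_of_nonneg_left (hXle i ω) hlam0.le)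
  -- mgf of each summand
  have hmgf : ∀ i, mgf (X i) μ lam =
      p i * Real.exp (lam * f i true) + (1 - p i) * Real.exp (lam * f i false) := by
    intro i
    exact bool_integral μ (U i) (hUmeas i) (hp i).1.le (hp i).2 (hUp i)
      (fun b => Real.exp (lam * f i b))
  have hmgf_le : ∀ i, mgf (X i) μ lam ≤
      Real.exp (lam ^ 2 * ((ℓ i) ^ 2 * (p i * (1 - p i)))) := by
    intro i
    rw [hmgf i]
    have ht : f i true = ℓ i * ((1:ℝ) - p i) := by simp [hf]
    have hfa : f i false = ℓ i * ((0:ℝ) - p i) := by simp [hf]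
    rw [ht, hfa]
    refine bern_mgf_le (hℓ i).1 (hp i).1 (hp i).2 hlam0.le ?_
    calc lam * ℓ i ≤ lam * M := mul_le_mul_of_nonneg_left (hℓ i).2 hlam0.le
      _ ≤ 1/2 := hlamM
  -- sum
  have hSint : Integrable (fun ω => Real.exp (lam * (∑ i, X i) ω)) μ :=
    hXindep.integrable_exp_mul_sum hXmeas (fun i _ => hXint i)
  have hmgfsum : mgf (∑ i, X i) μ lam ≤ Real.exp (lam ^ 2 * L) := by
    rw [hXindep.mgf_sum hXmeas]
    calc ∏ i, mgf (X i) μ lam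
        ≤ ∏ i, Real.exp (lam ^ 2 * ((ℓ i) ^ 2 * (p i * (1 - p i)))) :=
          Finset.prod_le_prod (fun i _ => mgf_nonneg) (fun i _ => hmgf_le i)
      _ = Real.exp (∑ i, lam ^ 2 * ((ℓ i) ^ 2 * (p i * (1 - p i)))) :=
          (Real.exp_sum _ _).symm
      _ = Real.exp (lam ^ 2 * L) := by
          rw [← Finset.mul_sum, hL]; congr 2; apply Finset.sum_congr rfl; intros; ring
  -- Chernoff
  have hch := measure_ge_le_exp_mul_mgf (X := ∑ i, X i) (μ := μ) (t := lam)
    (ψ * H) hlam0.le hSint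
  -- the set in question
  have hset : {ω | ψ * H ≤ ∑ i, ℓ i * ((if U i ω then (1 : ℝ) else 0) - p i)} =
      {ω | ψ * H ≤ (∑ i, X i) ω} := by
    ext ω
    simp [hX, hf, Finset.sum_apply]
  -- key exponent inequality
  have hLM : L ≤ M * H := by
    have h1 : L ≤ M * ∑ i, ℓ i * p i := by
      rw [hL, Finset.mul_sum]
      refine Finset.sum_le_sum fun i _ => ?_
      have h1 := (hℓ i).1; have h2 := (hℓ i).2; have h3 := (hp i).1
      nlinarith [mul_nonneg (mul_nonneg h1 h3.le) (sub_nonneg.mpr h2),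
        mul_nonneg (mul_nonneg (mul_nonneg h1 h1) h3.le) h3.le]
    nlinarith
  have hH3 : 4 * M * y ^ 3 ≤ H := by
    have h5 : M * (4 * M * y ^ 3) ≤ M * H := by nlinarith [hLeq, hLM]
    exact le_of_mul_le_mul_left h5 hM
  have hexp : Real.exp (-lam * (ψ * H)) * Real.exp (lam ^ 2 * L) ≤ Real.exp (-y) := by
    rw [← Real.exp_add]
    apply Real.exp_le_exp.mpr
    have e1 : lam ^ 2 * L = y := by
      rw [hlam, hLeq]
      field_simp
      ring
    have e2 : 2 * y ≤ lam * (ψ * H) := by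
      have hform : lam * (ψ * H) = H / (2 * M * y ^ 2) := by
        rw [hlam, hψy]
        field_simp
      rw [hform, le_div_iff₀ (by positivity)]
      nlinarith [hH3]
    linarith
  -- combine
  rw [hset]
  have hfin : μ {ω | ψ * H ≤ (∑ i, X i) ω} =
      ENNReal.ofReal (μ {ω | ψ * H ≤ (∑ i, X i) ω}).toReal :=
    (ENNReal.ofReal_toReal (measure_ne_top μ _)).symm
  rw [hfin]
  apply ENNReal.ofReal_le_ofReal
  calc (μ {ω | ψ * H ≤ (∑ i, X i) ω}).toReal
      ≤ Real.exp (-lam * (ψ * H)) * mgf (∑ i, X i) μ lam := hch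
    _ ≤ Real.exp (-lam * (ψ * H)) * Real.exp (lam ^ 2 * L) :=
        mul_le_mul_of_nonneg_left hmgfsum (Real.exp_pos _).le
    _ ≤ Real.exp (-y) := hexp
end
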